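/- Let λ, μ > 0, z > 0, x ∈ ℝ, y ≠ 0, T ∈ ℝ, and set δ = √( (μ−λ)² + 4 μ λ z ) and à = [[λ, −μ z/y], [−λ y, μ]]. Then e^{(λ+μ)T/2} · (1, 1) · exp(−à T) · (1, xy)ᵀ = (1 + xy) cosh(δT/2) + (1/δ) [ 2 y λ + 2 x z μ + (μ−λ)(1 − xy) ] sinh(δT/2). -/

import Mathlib

open Matrix

set_option maxHeartbeats 1000000 in
/-- Closed form of the per-atom generating function
`f_T(x,y,z) = e^{(lam+mu)T/2} (1,1) e^{-A T} (1,xy)^T`. -/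
theorem stmt_14 (lam mu z x y T : ℝ) (hlam : 0 < lam) (hmu : 0 < mu) (hz : 0 < z)
    (hy : y ≠ 0)
    (δ : ℝ) (hδ : δ = Real.sqrt ((mu - lam) ^ 2 + 4 * mu * lam * z))
    (A : Matrix (Fin 2) (Fin 2) ℝ) (hA : A = !![lam, -(mu * z / y); -(lam * y), mu]) :
    Real.exp ((lam + mu) * T / 2) *
      (![1, 1] ⬝ᵥ (NormedSpace.exp (-(T • A))).mulVec ![1, x * y]) =
    (1 + x * y) * Real.cosh (δ * T / 2) +
      (1 / δ) * (2 * y * lam + 2 * x * z * mu + (mu - lam) * (1 - x * y)) *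
        Real.sinh (δ * T / 2) := by
  subst hA
  have hδpos : 0 < δ := by
    rw [hδ]; apply Real.sqrt_pos.mpr; positivity
  have hδsq : δ ^ 2 = (mu - lam) ^ 2 + 4 * mu * lam * z := by
    rw [hδ]; exact Real.sq_sqrt (by positivity)
  set a : ℝ := -(mu * z / y) with ha_def
  have ha : a ≠ 0 := by
    simp only [ha_def, neg_ne_zero, div_ne_zero_iff]
    exact ⟨by positivity, hy⟩
  set νp : ℝ := (lam + mu + δ) / 2 with hνp
  set νm : ℝ := (lam + mu - δ) / 2 with hνm
  set P : Matrix (Fin 2) (Fin 2) ℝ := !![a, a; νp - lam, νm - lam] with hP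
  have hdet : P.det = -(a * δ) := by
    rw [hP, det_fin_two_of, hνp, hνm]; ring
  have hdetu : IsUnit P.det := by rw [hdet]; exact (neg_ne_zero.mpr (mul_ne_zero ha hδpos.ne')).isUnit
  have hPu : IsUnit P := (Matrix.isUnit_iff_isUnit_det P).mpr hdetu
  set D : Matrix (Fin 2) (Fin 2) ℝ := Matrix.diagonal ![-(T * νp), -(T * νm)] with hD
  have hDm : D = !![-(T * νp), 0; 0, -(T * νm)] := by
    ext i j; fin_cases i <;> fin_cases j <;> simp [hD, Matrix.diagonal]
  have key : -(T • (!![lam, -(mu * z / y); -(lam * y), mu] : Matrix (Fin 2) (Fin 2) ℝ))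
      = P * D * P⁻¹ := by
    have h1 : -(T • (!![lam, -(mu * z / y); -(lam * y), mu] : Matrix (Fin 2) (Fin 2) ℝ)) * P
        = P * D := by
      rw [hDm, hP]
      ext i j
      fin_cases i <;> fin_cases j <;>
        simp [Matrix.mul_apply, Fin.sum_univ_two, Matrix.smul_apply, hνp, hνm, ha_def] <;>
        field_simp <;> (first
          | linear_combination T * hδsq
          | linear_combination (2 * T * y) * hδsq
          | linear_combination (-(2 * T * y)) * hδsq
          | ring)
    calc -(T • (!![lam, -(mu * z / y); -(lam * y), mu] : Matrix (Fin 2) (Fin 2) ℝ))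
        = -(T • !![lam, -(mu * z / y); -(lam * y), mu]) * (P * P⁻¹) := by
          rw [Matrix.mul_nonsing_inv P hdetu, mul_one]
      _ = P * D * P⁻¹ := by rw [← Matrix.mul_assoc, h1]
  rw [key, Matrix.exp_conj P D hPu]
  have hexpD : NormedSpace.exp D
      = !![Real.exp (-(T * νp)), 0; 0, Real.exp (-(T * νm))] := by
    rw [hD, Matrix.exp_diagonal]
    ext i j
    fin_cases i <;> fin_cases j <;>
      simp [Matrix.diagonal, Pi.exp_def, Real.exp_eq_exp_ℝ]
  have hPinv : P⁻¹ = (-(a * δ))⁻¹ • !![νm - lam, -a; -(νp - lam), a] := by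
    rw [Matrix.inv_def, hdet, hP, Matrix.adjugate_fin_two_of, Ring.inverse_eq_inv]
  rw [hexpD]
  have habsorb : Real.exp ((lam + mu) * T / 2) *
      (![1, 1] ⬝ᵥ (P * !![Real.exp (-(T * νp)), 0; 0, Real.exp (-(T * νm))] * P⁻¹).mulVec
        ![1, x * y])
      = ![1, 1] ⬝ᵥ (P * !![Real.exp (-(δ * T / 2)), 0; 0, Real.exp (δ * T / 2)] * P⁻¹).mulVec
        ![1, x * y] := by
    have hsm : Real.exp ((lam + mu) * T / 2) •
        (!![Real.exp (-(T * νp)), 0; 0, Real.exp (-(T * νm))] : Matrix (Fin 2) (Fin 2) ℝ)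
        = !![Real.exp (-(δ * T / 2)), 0; 0, Real.exp (δ * T / 2)] := by
      ext i j
      fin_cases i <;> fin_cases j <;>
        simp [Matrix.smul_apply, ← Real.exp_add] <;>
        (congr 1; simp only [hνp, hνm]; ring)
    rw [← smul_eq_mul, ← dotProduct_smul, ← Matrix.smul_mulVec,
      ← Matrix.smul_mul, ← Matrix.mul_smul, hsm]
  rw [habsorb, hPinv, hP]
  simp only [Matrix.mul_smul, Matrix.mul_fin_two, Matrix.smul_apply, Matrix.mulVec,
    dotProduct, Fin.sum_univ_two, Matrix.cons_val', Matrix.cons_val_zero,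
    Matrix.cons_val_one, Matrix.head_cons, Matrix.of_apply, Matrix.cons_val_fin_one, smul_eq_mul]
  rw [Real.cosh_eq, Real.sinh_eq]
  simp only [hνp, hνm, ha_def]
  have hμz : mu * z ≠ 0 := by positivity
  field_simp
  ring_nf
  first
  | linear_combination (y * (Real.exp (δ * T * (1/2)) - Real.exp (δ * T * (-1/2)))) * hδsq
  | linear_combination (1 + 32 * y^8 * mu^3 * z^3 * δ^4 *
      (Real.exp (δ * T * (-1/2)) - Real.exp (δ * T * (1/2)))) * hδsq
  | linear_combination (-(32 * y^8 * mu^3 * z^3 * δ^4 *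
      (Real.exp (δ * T * (-1/2)) - Real.exp (δ * T * (1/2))))) * hδsq
  | linear_combination (32 * y^8 * mu^3 * z^3 * δ^4 *
      (Real.exp (δ * T * (-1/2)) - Real.exp (δ * T * (1/2)))) * hδsq
  | linear_combination (1 - 32 * y^8 * mu^3 * z^3 * δ^4 *
      (Real.exp (δ * T * (-1/2)) - Real.exp (δ * T * (1/2)))) * hδsq
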